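/- For r ≥ 2, a ≥ 1, λ > 0, and Q(x) = (1+λ+a^r+λx^r)((1+λ)ax+λa+x)^r − ((1+λ)a^r x^r + λa^r + x^r)(1+λ+a+λx)^r, one has Q''(a) = (1+λ)^{r−1} r a^{r−2}(a+1)^{r−2} · λ · [ (r−1)(a^{r+2} − 1) + 2r(a^{r+1} − a) + (r+1)(a^r − a^2) ]; in particular Q''(a) > 0 for a > 1, Q''(a) = 0 for a = 1. -/

import Mathlib

set_option maxHeartbeats 2000000 in
/-- The second derivative of the mixture polynomial `Q` at `x = a` equals
`(1+λ)^{r−1} r a^{r−2}(a+1)^{r−2} λ [(r−1)(a^{r+2}−1)+2r(a^{r+1}−a)+(r+1)(a^r−a^2)]`;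
in particular it is positive for `a > 1` and zero for `a = 1`. -/
theorem stmt_10 (r : ℕ) (hr : 2 ≤ r) (a L : ℝ) (ha : 1 ≤ a) (hL : 0 < L)
    (Q : ℝ → ℝ)
    (hQ : ∀ x : ℝ, Q x =
      (1 + L + a ^ r + L * x ^ r) * ((1 + L) * a * x + L * a + x) ^ r -
      ((1 + L) * a ^ r * x ^ r + L * a ^ r + x ^ r) * (1 + L + a + L * x) ^ r) :
    deriv (deriv Q) a =
      (1 + L) ^ (r - 1) * r * a ^ (r - 2) * (a + 1) ^ (r - 2) * L *
        (((r : ℝ) - 1) * (a ^ (r + 2) - 1) + 2 * r * (a ^ (r + 1) - a) +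
          ((r : ℝ) + 1) * (a ^ r - a ^ 2)) ∧
    (1 < a → 0 < deriv (deriv Q) a) ∧ (a = 1 → deriv (deriv Q) a = 0) := by
  obtain ⟨s, rfl⟩ := Nat.exists_eq_add_of_le' hr
  have hQf : Q = fun x : ℝ =>
      (1 + L + a ^ (s+2) + L * x ^ (s+2)) * ((1 + L) * a * x + L * a + x) ^ (s+2) -
      ((1 + L) * a ^ (s+2) * x ^ (s+2) + L * a ^ (s+2) + x ^ (s+2)) * (1 + L + a + L * x) ^ (s+2) :=
    funext hQ
  subst hQf
  have hu : ∀ x : ℝ, HasDerivAt (fun x : ℝ => (1 + L) * a * x + L * a + x) ((1+L)*a+1) x := by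
    intro x
    simpa using (((hasDerivAt_id x).const_mul ((1+L)*a)).add_const (L*a)).fun_add (hasDerivAt_id x)
  have hv : ∀ x : ℝ, HasDerivAt (fun x : ℝ => 1 + L + a + L * x) L x := by
    intro x
    simpa using ((hasDerivAt_id x).const_mul L).const_add (1+L+a)
  have hx1 : ∀ x : ℝ, HasDerivAt (fun x : ℝ => x^(s+1)) (((s:ℝ)+1)*x^s) x := by
    intro x; simpa using hasDerivAt_pow (s+1) x
  have hx2 : ∀ x : ℝ, HasDerivAt (fun x : ℝ => x^(s+2)) (((s:ℝ)+2)*x^(s+1)) x := by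
    intro x; simpa using hasDerivAt_pow (s+2) x
  have hu1 : ∀ x : ℝ, HasDerivAt (fun x : ℝ => ((1+L)*a*x+L*a+x)^(s+1))
      (((s:ℝ)+1) * ((1+L)*a*x+L*a+x)^s * ((1+L)*a+1)) x := by
    intro x; simpa using (hu x).fun_pow (s+1)
  have hu2 : ∀ x : ℝ, HasDerivAt (fun x : ℝ => ((1+L)*a*x+L*a+x)^(s+2))
      (((s:ℝ)+2) * ((1+L)*a*x+L*a+x)^(s+1) * ((1+L)*a+1)) x := by
    intro x; simpa using (hu x).fun_pow (s+2)
  have hv1 : ∀ x : ℝ, HasDerivAt (fun x : ℝ => (1+L+a+L*x)^(s+1))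
      (((s:ℝ)+1) * (1+L+a+L*x)^s * L) x := by
    intro x; simpa using (hv x).fun_pow (s+1)
  have hv2 : ∀ x : ℝ, HasDerivAt (fun x : ℝ => (1+L+a+L*x)^(s+2))
      (((s:ℝ)+2) * (1+L+a+L*x)^(s+1) * L) x := by
    intro x; simpa using (hv x).fun_pow (s+2)
  have hD1 : ∀ x : ℝ, HasDerivAt (fun x : ℝ =>
      (1 + L + a ^ (s+2) + L * x ^ (s+2)) * ((1 + L) * a * x + L * a + x) ^ (s+2) -
      ((1 + L) * a ^ (s+2) * x ^ (s+2) + L * a ^ (s+2) + x ^ (s+2)) * (1 + L + a + L * x) ^ (s+2))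
      ( (L * (((s:ℝ)+2) * x^(s+1))) * ((1+L)*a*x+L*a+x)^(s+2)
        + (1+L+a^(s+2)+L*x^(s+2)) * (((s:ℝ)+2) * ((1+L)*a*x+L*a+x)^(s+1) * ((1+L)*a+1))
        - ( ((1+L)*a^(s+2) * (((s:ℝ)+2)*x^(s+1)) + ((s:ℝ)+2)*x^(s+1)) * (1+L+a+L*x)^(s+2)
          + ((1+L)*a^(s+2)*x^(s+2)+L*a^(s+2)+x^(s+2)) * (((s:ℝ)+2) * (1+L+a+L*x)^(s+1) * L) ) ) x := by
    intro x
    exact ((((hx2 x).const_mul L).const_add (1+L+a^(s+2))).mul (hu2 x)).sub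
      (((((hx2 x).const_mul ((1+L)*a^(s+2))).add_const (L*a^(s+2))).add (hx2 x)).mul (hv2 x))
  have hQ' : deriv (fun x : ℝ =>
      (1 + L + a ^ (s+2) + L * x ^ (s+2)) * ((1 + L) * a * x + L * a + x) ^ (s+2) -
      ((1 + L) * a ^ (s+2) * x ^ (s+2) + L * a ^ (s+2) + x ^ (s+2)) * (1 + L + a + L * x) ^ (s+2))
      = fun x : ℝ =>
      (L * (((s:ℝ)+2) * x^(s+1))) * ((1+L)*a*x+L*a+x)^(s+2)
        + (1+L+a^(s+2)+L*x^(s+2)) * (((s:ℝ)+2) * ((1+L)*a*x+L*a+x)^(s+1) * ((1+L)*a+1))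
        - ( ((1+L)*a^(s+2) * (((s:ℝ)+2)*x^(s+1)) + ((s:ℝ)+2)*x^(s+1)) * (1+L+a+L*x)^(s+2)
          + ((1+L)*a^(s+2)*x^(s+2)+L*a^(s+2)+x^(s+2)) * (((s:ℝ)+2) * (1+L+a+L*x)^(s+1) * L) ) :=
    funext fun x => (hD1 x).deriv
  have hA1 := (((hx1 a).const_mul ((s:ℝ)+2)).const_mul L).mul (hu2 a)
  have hA2 := (((hx2 a).const_mul L).const_add (1+L+a^(s+2))).mul
      (((hu1 a).const_mul ((s:ℝ)+2)).mul_const ((1+L)*a+1))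
  have hA3 := ((((hx1 a).const_mul ((s:ℝ)+2)).const_mul ((1+L)*a^(s+2))).add
      ((hx1 a).const_mul ((s:ℝ)+2))).mul (hv2 a)
  have hA4 := (((((hx2 a).const_mul ((1+L)*a^(s+2))).add_const (L*a^(s+2))).add (hx2 a)).mul
      (((hv1 a).const_mul ((s:ℝ)+2)).mul_const L))
  have e2 := (show HasDerivAt (fun x : ℝ =>
      (L * (((s:ℝ)+2) * x^(s+1))) * ((1+L)*a*x+L*a+x)^(s+2)
        + (1+L+a^(s+2)+L*x^(s+2)) * (((s:ℝ)+2) * ((1+L)*a*x+L*a+x)^(s+1) * ((1+L)*a+1))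
        - ( ((1+L)*a^(s+2) * (((s:ℝ)+2)*x^(s+1)) + ((s:ℝ)+2)*x^(s+1)) * (1+L+a+L*x)^(s+2)
          + ((1+L)*a^(s+2)*x^(s+2)+L*a^(s+2)+x^(s+2)) * (((s:ℝ)+2) * (1+L+a+L*x)^(s+1) * L) )) _ a from
    (hA1.add hA2).sub (hA3.add hA4)).deriv
  have key : deriv (deriv (fun x : ℝ =>
      (1 + L + a ^ (s+2) + L * x ^ (s+2)) * ((1 + L) * a * x + L * a + x) ^ (s+2) -
      ((1 + L) * a ^ (s+2) * x ^ (s+2) + L * a ^ (s+2) + x ^ (s+2)) * (1 + L + a + L * x) ^ (s+2))) a =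
      (1 + L) ^ (s + 2 - 1) * ↑(s + 2) * a ^ (s + 2 - 2) * (a + 1) ^ (s + 2 - 2) * L *
        ((↑(s + 2) - 1) * (a ^ (s + 2 + 2) - 1) + 2 * ↑(s + 2) * (a ^ (s + 2 + 1) - a) +
          (↑(s + 2) + 1) * (a ^ (s + 2) - a ^ 2)) := by
    rw [hQ']
    refine e2.trans ?_
    simp only [Pi.add_apply]
    simp only [show s + 2 - 1 = s + 1 from rfl, show s + 2 - 2 = s from rfl]
    rw [show (1+L)*a*a+L*a+a = a*((1+L)*(a+1)) from by ring,
        show 1+L+a+L*a = (1+L)*(a+1) from by ring]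
    simp only [mul_pow]
    push_cast
    ring
  refine ⟨key, fun ha1 => ?_, fun ha1 => ?_⟩
  · rw [key]
    have p1 : (1:ℝ) < a ^ (s+2+2) := one_lt_pow₀ ha1 (by omega)
    have p2 : a < a ^ (s+2+1) := by
      calc a = a ^ 1 := (pow_one a).symm
        _ < a ^ (s+2+1) := pow_lt_pow_right₀ ha1 (by omega)
    have p3 : a ^ 2 ≤ a ^ (s+2) := pow_le_pow_right₀ (le_of_lt ha1) (by omega)
    have hs0 : (0:ℝ) ≤ s := Nat.cast_nonneg s
    have hb : 0 < ((↑(s + 2) : ℝ) - 1) * (a ^ (s + 2 + 2) - 1) + 2 * ↑(s + 2) * (a ^ (s + 2 + 1) - a) +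
        ((↑(s + 2) : ℝ) + 1) * (a ^ (s + 2) - a ^ 2) := by
      push_cast
      nlinarith [p1, p2, p3]
    have hfront : 0 < (1 + L) ^ (s + 2 - 1) * (↑(s + 2) : ℝ) * a ^ (s + 2 - 2) * (a + 1) ^ (s + 2 - 2) * L := by
      have h1L : (0:ℝ) < 1 + L := by linarith
      have h0a : (0:ℝ) < a := by linarith
      positivity
    exact mul_pos hfront hb
  · subst ha1
    rw [key]
    norm_num
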